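/- arXiv:1405.4998 — 3 statements merged into one kernel-verified Lean document; each statement's English description precedes it below -/
import Mathlib

section
/- Let n and r be positive integers with n·r ≥ 2. Then there is exactly one r-multipartition λ of n with s(λ) = 1, where s(λ) = Σ_{i=1}^r ( r·|λ^(i)| − i·ℓ(λ^(i)) ). Explicitly: if r ≥ 2, the unique such λ has λ^(r−1) = (1), λ^(r) = (1^{n−1}) (the partition of n−1 with all parts equal to 1, empty when n = 1), and λ^(i) = ∅ for all other i; if r = 1 (so n ≥ 2), the unique such λ is the partition (2,1^{n−2}) of n. -/
lemma mcard_le_sum (m : Multiset ℕ) (h : ∀ x ∈ m, 0 < x) : m.card ≤ m.sum := by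
  simpa using Multiset.card_nsmul_le_sum (fun x hx => h x hx)

lemma eq_rep_of_sum_eq_card (m : Multiset ℕ) (h : ∀ x ∈ m, 0 < x)
    (hs : m.sum = m.card) : m = Multiset.replicate m.card 1 := by
  apply Multiset.eq_replicate_card.2
  intro b hb
  by_contra hb1
  have h2 : 2 ≤ b := by have := h b hb; omega
  obtain ⟨t, rfl⟩ := Multiset.exists_cons_of_mem hb
  have ht : t.card ≤ t.sum := mcard_le_sum t (fun x hx => h x (Multiset.mem_cons_of_mem hx))
  simp [Multiset.sum_cons, Multiset.card_cons] at hs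
  omega

lemma eq_two_rep_of_sum_eq_card_succ (m : Multiset ℕ) (h : ∀ x ∈ m, 0 < x)
    (hs : m.sum = m.card + 1) : m = 2 ::ₘ Multiset.replicate (m.card - 1) 1 := by
  have hex : ∃ b ∈ m, b ≠ 1 := by
    by_contra hc
    push_neg at hc
    have := Multiset.eq_replicate_card.2 hc
    rw [this] at hs
    simp at hs
  obtain ⟨b, hb, hb1⟩ := hex
  have h2 : 2 ≤ b := by have := h b hb; omega
  obtain ⟨t, rfl⟩ := Multiset.exists_cons_of_mem hb
  have hpos : ∀ x ∈ t, 0 < x := fun x hx => h x (Multiset.mem_cons_of_mem hx)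
  have ht : t.card ≤ t.sum := mcard_le_sum t hpos
  simp only [Multiset.sum_cons, Multiset.card_cons] at hs
  have hb2 : b = 2 := by omega
  have hts : t.sum = t.card := by omega
  rw [hb2, eq_rep_of_sum_eq_card t hpos hts]
  simp

/-- The statistic `s(λ) = Σ_{i=1}^r ( r·|λ^(i)| − i·ℓ(λ^(i)) )` attached to an `r`-tuple of
partitions (each partition encoded as the multiset of its parts); the index `i : Fin r`
corresponds to the component `λ^(i+1)`, so the factor is `(i : ℕ) + 1`. -/
def giesekerStat (r : ℕ) (lam : Fin r → Multiset ℕ) : ℤ :=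
  ∑ i : Fin r,
    ((r : ℤ) * ((lam i).sum : ℤ) - (((i : ℕ) : ℤ) + 1) * ((lam i).card : ℤ))

/-- The explicit `r`-multipartition of `n` with `s(λ) = 1`: for `r ≥ 2` it has
`λ^(r−1) = (1)`, `λ^(r) = (1^{n−1})` and all other components empty; for `r = 1`
it is the partition `(2,1^{n−2})` of `n`. -/
def theMultipartition (n r : ℕ) : Fin r → Multiset ℕ := fun i =>
  if r = 1 then 2 ::ₘ Multiset.replicate (n - 2) 1
  else if (i : ℕ) = r - 2 then ({1} : Multiset ℕ)
  else if (i : ℕ) = r - 1 then Multiset.replicate (n - 1) 1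
  else 0

/-- If `n·r ≥ 2`, there is exactly one `r`-multipartition `λ` of `n` with `s(λ) = 1`,
namely `theMultipartition n r`. -/
theorem stmt1 (n r : ℕ) (hn : 0 < n) (hr : 0 < r) (hnr : 2 ≤ n * r) :
    ((∀ i : Fin r, ∀ x ∈ theMultipartition n r i, 0 < x) ∧
      (∑ i : Fin r, (theMultipartition n r i).sum) = n ∧
      giesekerStat r (theMultipartition n r) = 1) ∧
    (∀ lam : Fin r → Multiset ℕ,
      (∀ i : Fin r, ∀ x ∈ lam i, 0 < x) →
      (∑ i : Fin r, (lam i).sum) = n →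
      giesekerStat r lam = 1 →
      lam = theMultipartition n r) := by
  constructor
  · -- existence
    by_cases hr1 : r = 1
    · subst hr1
      have hn2 : 2 ≤ n := by omega
      refine ⟨?_, ?_, ?_⟩
      · intro i x hx
        simp only [theMultipartition, eq_self_iff_true, if_true] at hx
        rcases Multiset.mem_cons.mp hx with h | h
        · omega
        · have := Multiset.eq_of_mem_replicate h
          omega
      · rw [Fin.sum_univ_one]
        simp [theMultipartition, Multiset.sum_replicate]
        omega
      · unfold giesekerStat
        rw [Fin.sum_univ_one]
        simp [theMultipartition, Multiset.sum_replicate]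
        omega
    · have hr2 : 2 ≤ r := by omega
      set a : Fin r := ⟨r - 2, by omega⟩ with ha
      set b : Fin r := ⟨r - 1, by omega⟩ with hb
      have hab : a ≠ b := by
        simp only [ha, hb, ne_eq, Fin.mk.injEq]
        omega
      have hva : theMultipartition n r a = ({1} : Multiset ℕ) := by
        simp [theMultipartition, hr1, ha]
      have hvb : theMultipartition n r b = Multiset.replicate (n-1) 1 := by
        have : r - 1 ≠ r - 2 := by omega
        simp [theMultipartition, hr1, hb, this]
      have hvc : ∀ c : Fin r, c ≠ a → c ≠ b → theMultipartition n r c = 0 := by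
        intro c hca hcb
        have h1 : (c : ℕ) ≠ r - 2 := by
          intro h; exact hca (Fin.ext (by simpa [ha] using h))
        have h2 : (c : ℕ) ≠ r - 1 := by
          intro h; exact hcb (Fin.ext (by simpa [hb] using h))
        simp [theMultipartition, hr1, h1, h2]
      refine ⟨?_, ?_, ?_⟩
      · intro i x hx
        by_cases h1 : i = a
        · rw [h1, hva] at hx; simp at hx; omega
        by_cases h2 : i = b
        · rw [h2, hvb] at hx; have := Multiset.eq_of_mem_replicate hx; omega
        · rw [hvc i h1 h2] at hx; simp at hx
      · rw [Finset.sum_eq_add_of_mem a b (Finset.mem_univ a) (Finset.mem_univ b) hab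
          (fun c _ hc => by rw [hvc c hc.1 hc.2]; rfl)]
        rw [hva, hvb]
        simp [Multiset.sum_replicate]
        omega
      · unfold giesekerStat
        rw [Finset.sum_eq_add_of_mem a b (Finset.mem_univ a) (Finset.mem_univ b) hab
          (fun c _ hc => by rw [hvc c hc.1 hc.2]; simp)]
        rw [hva, hvb]
        simp [Multiset.sum_replicate, ha, hb]
        have e1 : ((r - 2 : ℕ) : ℤ) = (r : ℤ) - 2 := by omega
        have e2 : ((r - 1 : ℕ) : ℤ) = (r : ℤ) - 1 := by omega
        have e3 : ((n - 1 : ℕ) : ℤ) = (n : ℤ) - 1 := by omega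
        rw [e1, e2, e3]
        ring
  · -- uniqueness
    intro lam hpos hsum hstat
    set S : Fin r → ℕ := fun i => (lam i).sum with hS
    set L : Fin r → ℕ := fun i => (lam i).card with hL
    have hle : ∀ i, L i ≤ S i := fun i => mcard_le_sum _ (hpos i)
    have hlt : ∀ i : Fin r, (i : ℕ) + 1 ≤ r := fun i => i.2
    have hmul : ∀ i : Fin r, ((i : ℕ) + 1) * L i ≤ r * S i :=
      fun i => Nat.mul_le_mul (hlt i) (hle i)
    set d : Fin r → ℕ := fun i => r * S i - ((i : ℕ) + 1) * L i with hd
    have hcast : ∀ i : Fin r, ((d i : ℕ) : ℤ) =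
        (r : ℤ) * ((lam i).sum : ℤ) - (((i : ℕ) : ℤ) + 1) * ((lam i).card : ℤ) := by
      intro i
      have := hmul i
      simp only [hd]
      rw [Nat.cast_sub this]
      simp only [Nat.cast_mul, Nat.cast_add, Nat.cast_one]
      rfl
    have hsd : ∑ i, d i = 1 := by
      have h1 : ((∑ i, d i : ℕ) : ℤ) = 1 := by
        rw [Nat.cast_sum]
        rw [← hstat]
        unfold giesekerStat
        exact Finset.sum_congr rfl fun i _ => hcast i
      exact_mod_cast h1
    -- extract the unique nonzero index
    have hex : ∃ j : Fin r, d j ≠ 0 := by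
      by_contra h
      push_neg at h
      rw [Finset.sum_eq_zero (fun i _ => h i)] at hsd
      omega
    obtain ⟨j, hj⟩ := hex
    have hj1 : d j ≤ 1 := by
      have := Finset.single_le_sum (f := d) (fun i _ => Nat.zero_le _) (Finset.mem_univ j)
      omega
    have hdj : d j = 1 := by omega
    have hzero : ∀ i : Fin r, i ≠ j → d i = 0 := by
      intro i hij
      have hsub := Finset.sum_le_sum_of_subset (Finset.subset_univ ({i, j} : Finset (Fin r)))
        (f := d)
      rw [Finset.sum_pair hij] at hsub
      omega
    -- equations from d values
    have heqj : r * S j = ((j : ℕ) + 1) * L j + 1 := by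
      have h1 := hmul j
      have h2 : r * S j - ((j : ℕ) + 1) * L j = 1 := hdj
      omega
    have heqz : ∀ i : Fin r, i ≠ j → S i = L i ∧ (L i = 0 ∨ (i : ℕ) + 1 = r) := by
      intro i hij
      have h1 := hmul i
      have h2 : r * S i - ((i : ℕ) + 1) * L i = 0 := hzero i hij
      have h3 : r * S i = ((i : ℕ) + 1) * L i := by omega
      have h4 : ((i : ℕ) + 1) * L i ≤ r * L i := Nat.mul_le_mul_right _ (hlt i)
      have h5 : r * L i ≤ r * S i := Nat.mul_le_mul_left _ (hle i)
      have h6 : r * S i = r * L i := by omega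
      have h7 : S i = L i := Nat.eq_of_mul_eq_mul_left hr h6
      refine ⟨h7, ?_⟩
      by_cases hLi : L i = 0
      · exact Or.inl hLi
      · right
        have h8 : ((i : ℕ) + 1) * L i = r * L i := by omega
        exact Nat.eq_of_mul_eq_mul_right (Nat.pos_of_ne_zero hLi) h8
    by_cases hr1 : r = 1
    · -- r = 1
      subst hr1
      have hn2 : 2 ≤ n := by omega
      have hj0 : (j : ℕ) = 0 := by omega
      have hSj : S j = L j + 1 := by
        have h1 := heqj
        rw [hj0] at h1
        simpa using h1
      have hlamj : lam j = 2 ::ₘ Multiset.replicate (L j - 1) 1 :=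
        eq_two_rep_of_sum_eq_card_succ (lam j) (hpos j) hSj
      have hj1' : j = (0 : Fin 1) := Subsingleton.elim _ _
      have hsum1 : S j = n := by
        rw [← hsum, Fin.sum_univ_one, hj1']
      funext i
      have hij : i = j := Subsingleton.elim _ _
      rw [hij, hlamj]
      simp only [theMultipartition, eq_self_iff_true, if_true]
      congr 1
      congr 1
      omega
    · -- r ≥ 2
      have hr2 : 2 ≤ r := by omega
      -- S j = L j
      have hSLj : S j = L j := by
        by_contra hne
        have h1 : L j + 1 ≤ S j := by have := hle j; omega
        have h2 : r * (L j + 1) ≤ r * S j := Nat.mul_le_mul_left _ h1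
        rw [Nat.mul_add, Nat.mul_one] at h2
        have h3 : ((j : ℕ) + 1) * L j ≤ r * L j := Nat.mul_le_mul_right _ (hlt j)
        have h4 := heqj
        omega
      have heq2 : r * L j = ((j : ℕ) + 1) * L j + 1 := by
        have h1 := heqj
        rw [hSLj] at h1
        exact h1
      have heq3 : (r - ((j : ℕ) + 1)) * L j = 1 := by
        rw [Nat.sub_mul]
        omega
      have hj2 : (j : ℕ) = r - 2 ∧ L j = 1 := by
        have h1 : r - ((j : ℕ) + 1) = 1 := Nat.eq_one_of_mul_eq_one_right heq3
        have h2 : L j = 1 := Nat.eq_one_of_mul_eq_one_left heq3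
        have hlj := hlt j
        omega
      have hLj1 : L j = 1 := hj2.2
      have hlamj : lam j = ({1} : Multiset ℕ) := by
        have h1 := eq_rep_of_sum_eq_card (lam j) (hpos j) hSLj
        rw [h1, show Multiset.card (lam j) = 1 from hLj1]
        rfl
      set b : Fin r := ⟨r - 1, by omega⟩ with hb
      have hbj : b ≠ j := by
        intro h
        have : (b : ℕ) = (j : ℕ) := by rw [h]
        simp [hb, hj2.1] at this
        omega
      -- all other components
      have hrep : ∀ i : Fin r, i ≠ j → lam i = Multiset.replicate (L i) 1 := by
        intro i hij
        exact eq_rep_of_sum_eq_card (lam i) (hpos i) (heqz i hij).1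
      have hzeroL : ∀ i : Fin r, i ≠ j → i ≠ b → lam i = 0 := by
        intro i hij hib
        have h1 := (heqz i hij).2
        have h2 : (i : ℕ) + 1 ≠ r := by
          intro h
          exact hib (Fin.ext (by simp [hb]; omega))
        have h3 : L i = 0 := by tauto
        rw [hrep i hij, h3]
        simp
      -- compute L b from total sum
      have hsumjb : S j + S b = n := by
        rw [← hsum]
        rw [Finset.sum_eq_add_of_mem j b (Finset.mem_univ j) (Finset.mem_univ b)
          (Ne.symm hbj) (fun c _ hc => by
            show (lam c).sum = 0
            rw [hzeroL c hc.1 hc.2]; rfl)]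
      have hSb : S b = n - 1 := by
        have : S j = 1 := by rw [hSLj, hLj1]
        omega
      have hLb : L b = n - 1 := by
        have := (heqz b hbj).1
        omega
      have hlamb : lam b = Multiset.replicate (n - 1) 1 := by
        rw [hrep b hbj, hLb]
      -- conclude
      funext i
      by_cases hij : i = j
      · rw [hij, hlamj]
        simp [theMultipartition, hr1, hj2.1]
      · by_cases hib : i = b
        · rw [hib, hlamb]
          have h1 : r - 1 ≠ r - 2 := by omega
          simp [theMultipartition, hr1, hb, h1]
        · rw [hzeroL i hij hib]
          have h1 : (i : ℕ) ≠ r - 2 := by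
            intro h
            exact hij (Fin.ext (by rw [h, hj2.1]))
          have h2 : (i : ℕ) ≠ r - 1 := by
            intro h
            exact hib (Fin.ext (by rw [h]))
          simp [theMultipartition, hr1, h1, h2]
end

section
/- Let A be an associative unital ring and ℏ ∈ A a central element that is not a zero divisor, such that the quotient ring Ā = A/ℏA is commutative. Let f_1,…,f_k ∈ A be elements whose images f̄_1,…,f̄_k in Ā form a regular sequence, and let I = A f_1 + … + A f_k be the left ideal of A generated by the f_i. Assume moreover that for all i, j the commutator f_i f_j − f_j f_i lies in ℏI. Then I is ℏ-saturated: for every a ∈ A, if ℏa ∈ I then a ∈ I. -/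
/-- Finite sums of left multiples of `h` are left multiples of `h`,
with witness in a given submodule `P`. -/
private lemma aux_hsum {A : Type*} [Ring A] (h : A) (P : Submodule A A)
    {ι : Type*} (s : Finset ι) (g : ι → A)
    (hg : ∀ i ∈ s, ∃ w ∈ P, g i = h * w) :
    ∃ w ∈ P, ∑ i ∈ s, g i = h * w := by
  classical
  induction s using Finset.induction with
  | empty => exact ⟨0, P.zero_mem, by simp⟩
  | @insert a s hx ih =>
      obtain ⟨w1, hw1P, hw1⟩ := hg a (Finset.mem_insert_self a s)
      obtain ⟨w2, hw2P, hw2⟩ := ih (fun i hi => hg i (Finset.mem_insert_of_mem hi))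
      exact ⟨w1 + w2, P.add_mem hw1P hw2P, by
        rw [Finset.sum_insert hx, hw1, hw2, mul_add]⟩

private lemma aux_hsum' {A : Type*} [Ring A] (h : A)
    {ι : Type*} (s : Finset ι) (g : ι → A)
    (hg : ∀ i ∈ s, ∃ u : A, g i = h * u) :
    ∃ u : A, ∑ i ∈ s, g i = h * u := by
  obtain ⟨w, -, hw⟩ := aux_hsum h ⊤ s g (fun i hi => by
    obtain ⟨u, hu⟩ := hg i hi; exact ⟨u, trivial, hu⟩)
  exact ⟨w, hw⟩

/-- Extraction of coefficients from membership in the span of `{h} ∪ f '' {i < m}`. -/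
private lemma aux_of_mem {A : Type*} [Ring A] {h : A}
    (hcentral : ∀ a : A, h * a = a * h)
    {k : ℕ} {f : Fin k → A} {m : Fin k} {x : A}
    (hx : x ∈ Submodule.span A ({h} ∪ f '' {i : Fin k | i < m})) :
    ∃ c : Fin k → A, (∀ i : Fin k, ¬ i < m → c i = 0) ∧
      ∃ u : A, x - ∑ i, c i * f i = h * u := by
  classical
  induction hx using Submodule.span_induction with
  | mem x hx =>
      rcases hx with hx | ⟨i, hi, rfl⟩
      · rcases hx with rfl
        exact ⟨0, fun _ _ => rfl, 1, by simp⟩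
      · refine ⟨fun j => if j = i then 1 else 0, ?_, 0, ?_⟩
        · intro j hj
          by_cases hji : j = i
          · subst hji; exact absurd hi hj
          · simp [hji]
        · simp [ite_mul]
  | zero => exact ⟨0, fun _ _ => rfl, 0, by simp⟩
  | add x y hx hy ihx ihy =>
      obtain ⟨c1, s1, u1, e1⟩ := ihx
      obtain ⟨c2, s2, u2, e2⟩ := ihy
      refine ⟨fun i => c1 i + c2 i, fun i hi => by simp [s1 i hi, s2 i hi], u1 + u2, ?_⟩
      have : ∑ i, (c1 i + c2 i) * f i = ∑ i, c1 i * f i + ∑ i, c2 i * f i := by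
        rw [← Finset.sum_add_distrib]
        exact Finset.sum_congr rfl fun i _ => add_mul _ _ _
      rw [this, mul_add, ← e1, ← e2]; abel
  | smul a x hx ih =>
      obtain ⟨c0, s0, u0, e0⟩ := ih
      refine ⟨fun i => a * c0 i, fun i hi => by simp [s0 i hi], a * u0, ?_⟩
      have h1 : ∑ i, (a * c0 i) * f i = a * ∑ i, c0 i * f i := by
        rw [Finset.mul_sum]
        exact Finset.sum_congr rfl fun i _ => mul_assoc _ _ _
      have h2 : a • x = a * x := rfl
      rw [h2, h1, ← mul_sub, e0, ← mul_assoc, ← hcentral, mul_assoc]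

/-- Converse: coefficients give membership in the span of `{h} ∪ f '' {i < m}`. -/
private lemma aux_to_mem {A : Type*} [Ring A] {h : A}
    (hcentral : ∀ a : A, h * a = a * h)
    {k : ℕ} {f : Fin k → A} {m : Fin k} {v : A} :
    h * v ∈ Submodule.span A ({h} ∪ f '' {i : Fin k | i < m}) := by
  rw [hcentral v, ← smul_eq_mul]
  exact Submodule.smul_mem _ _ (Submodule.subset_span (Set.mem_union_left _ rfl))

/-- Key syzygy lemma: a relation `∑ cᵢ fᵢ ∈ hA` among the first `n` of the `fᵢ`
comes from (near-)Koszul relations modulo `hA`. -/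
private lemma aux_syz {A : Type*} [Ring A] {h : A}
    (hcentral : ∀ a : A, h * a = a * h)
    (hcommA : ∀ a b : A, ∃ c : A, a * b - b * a = h * c)
    {k : ℕ} {f : Fin k → A}
    (hreg : ∀ m : Fin k, ∀ a : A,
      f m * a ∈ Submodule.span A ({h} ∪ f '' {i : Fin k | i < m}) →
      a ∈ Submodule.span A ({h} ∪ f '' {i : Fin k | i < m})) :
    ∀ n : ℕ, ∀ c : Fin k → A, (∀ i : Fin k, n ≤ (i : ℕ) → c i = 0) →
      (∃ u, ∑ i, c i * f i = h * u) →
      ∃ d : Fin k → Fin k → A,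
        (∀ i j : Fin k, ¬((i : ℕ) < n ∧ (j : ℕ) < n) → d i j = 0) ∧
        (∀ i j : Fin k, ∃ u, d i j + d j i = h * u) ∧
        (∀ i : Fin k, ∃ u, d i i = h * u) ∧
        (∀ i : Fin k, ∃ u, c i - ∑ j, d i j * f j = h * u) := by
  classical
  intro n
  induction n with
  | zero =>
      intro c hc _
      exact ⟨fun _ _ => 0, fun _ _ _ => rfl, fun i j => ⟨0, by simp⟩, fun i => ⟨0, by simp⟩,
        fun i => ⟨0, by simp [hc i (Nat.zero_le _)]⟩⟩
  | succ n ih =>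
      rintro c hc ⟨u, hu⟩
      by_cases hnk : n < k
      · -- main case
        set m : Fin k := ⟨n, hnk⟩ with hm
        have hmval : (m : ℕ) = n := rfl
        set c₀ : Fin k → A := fun i => if (i : ℕ) < n then c i else 0 with hc₀
        have hsplit : ∑ i, c i * f i = (∑ i, c₀ i * f i) + c m * f m := by
          have hpt : ∀ i : Fin k, c i * f i = c₀ i * f i + (if i = m then c i else 0) * f i := by
            intro i
            rcases lt_trichotomy (i : ℕ) n with hi | hi | hi
            · have him : i ≠ m := fun hh => by rw [hh, hmval] at hi; omega
              simp [hc₀, hi, him]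
            · have him : i = m := Fin.ext (by rw [hmval]; exact hi)
              simp [hc₀, hi, him, hmval]
            · have him : i ≠ m := fun hh => by rw [hh, hmval] at hi; omega
              have hz : c i = 0 := hc i (by omega)
              simp [hc₀, him, hz]
          rw [Finset.sum_congr rfl fun i _ => hpt i, Finset.sum_add_distrib]
          congr 1
          simp [ite_mul]
        have hmem : f m * c m ∈ Submodule.span A ({h} ∪ f '' {i : Fin k | i < m}) := by
          obtain ⟨w, hw⟩ := hcommA (f m) (c m)
          have h1 : f m * c m = c m * f m + h * w := by
            rw [← hw]; abel
          have h2 : c m * f m = h * u - ∑ i, c₀ i * f i := by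
            rw [← hu, hsplit]; abel
          rw [h1, h2]
          refine Submodule.add_mem _ (Submodule.sub_mem _ (aux_to_mem hcentral)
            (Submodule.sum_mem _ fun i _ => ?_)) (aux_to_mem hcentral)
          by_cases hi : (i : ℕ) < n
          · have : c₀ i * f i = c₀ i • f i := rfl
            rw [this]
            exact Submodule.smul_mem _ _ (Submodule.subset_span
              (Set.mem_union_right _ ⟨i, by simpa [Fin.lt_def, hmval] using hi, rfl⟩))
          · simp [hc₀, hi]
        obtain ⟨e, hesupp, u₁, he⟩ := aux_of_mem hcentral (hreg m (c m) hmem)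
        have hesupp' : ∀ i : Fin k, ¬ (i : ℕ) < n → e i = 0 := fun i hi =>
          hesupp i (by rw [Fin.lt_def, hmval]; exact hi)
        set c' : Fin k → A := fun i => c₀ i + e i * f m with hc'
        have hc'supp : ∀ i : Fin k, n ≤ (i : ℕ) → c' i = 0 := by
          intro i hi
          have h1 : c₀ i = 0 := by simp [hc₀]; omega
          have h2 : e i = 0 := hesupp' i (by omega)
          simp [hc', h1, h2]
        -- ∑ c' i f i ∈ hA
        have hcomm2 : ∀ i : Fin k, ∃ v : A, (e i * f m) * f i - (e i * f i) * f m = h * v := by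
          intro i
          obtain ⟨w, hw⟩ := hcommA (f m) (f i)
          refine ⟨e i * w, ?_⟩
          have h1 : (e i * f m) * f i - (e i * f i) * f m = e i * (f m * f i - f i * f m) := by
            noncomm_ring
          rw [h1, hw, ← mul_assoc, ← hcentral, mul_assoc]
        obtain ⟨v, hv⟩ := aux_hsum' h Finset.univ
          (fun i => (e i * f m) * f i - (e i * f i) * f m) (fun i _ => hcomm2 i)
        have hc'sum : ∃ u', ∑ i, c' i * f i = h * u' := by
          refine ⟨u - u₁ * f m + v, ?_⟩
          have h1 : ∑ i, c' i * f i
              = (∑ i, c₀ i * f i) + ∑ i, (e i * f m) * f i := by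
            rw [← Finset.sum_add_distrib]
            exact Finset.sum_congr rfl fun i _ => add_mul _ _ _
          have h2 : ∑ i, (e i * f m) * f i
              = (∑ i, (e i * f i) * f m) + ∑ i, ((e i * f m) * f i - (e i * f i) * f m) := by
            rw [← Finset.sum_add_distrib]
            exact Finset.sum_congr rfl fun i _ => by abel
          have h3 : ∑ i, (e i * f i) * f m = (∑ i, e i * f i) * f m := by
            rw [Finset.sum_mul]
          have h4 : ∑ i, e i * f i = c m - h * u₁ := by rw [← he]; abel
          rw [h1, h2, h3, h4, hv]
          have h5 : (∑ i, c₀ i * f i) + c m * f m = h * u := by rw [← hsplit, hu]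
          have h6 : (c m - h * u₁) * f m = c m * f m - h * (u₁ * f m) := by
            rw [sub_mul, mul_assoc]
          rw [h6]
          have h8 : h * (u - u₁ * f m + v) = h * u - h * (u₁ * f m) + h * v := by
            rw [mul_add, mul_sub]
          rw [h8, ← h5]
          abel
        obtain ⟨d', hd0', hd1', hd2', hd3'⟩ := ih c' hc'supp hc'sum
        refine ⟨fun i j =>
          if (i : ℕ) < n ∧ (j : ℕ) < n then d' i j
          else if (i : ℕ) < n ∧ (j : ℕ) = n then -(e i)
          else if (i : ℕ) = n ∧ (j : ℕ) < n then e j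
          else 0, ?_, ?_, ?_, ?_⟩
        · intro i j hij
          beta_reduce
          split_ifs with h1 h2 h3
          · exact absurd ⟨by omega, by omega⟩ hij
          · exact absurd ⟨by omega, by omega⟩ hij
          · exact absurd ⟨by omega, by omega⟩ hij
          · rfl
        · intro i j
          beta_reduce
          split_ifs with h1 h2 h3 h4 h5 h6 h7 h8 h9 h10 h11 h12 <;>
            first
              | (exfalso; omega)
              | exact hd1' i j
              | exact ⟨0, by simp⟩
        · intro i
          beta_reduce
          split_ifs with h1 h2 h3
          · exact hd2' i
          · exfalso; omega
          · exfalso; omega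
          · exact ⟨0, by simp⟩
        · intro i
          beta_reduce
          rcases lt_trichotomy (i : ℕ) n with hi | hi | hi
          · -- i < n
            have hstep : ∀ j : Fin k,
                (if (i : ℕ) < n ∧ (j : ℕ) < n then d' i j
                  else if (i : ℕ) < n ∧ (j : ℕ) = n then -(e i)
                  else if (i : ℕ) = n ∧ (j : ℕ) < n then e j
                  else 0) * f j
                = d' i j * f j + (if j = m then -(e i) else 0) * f j := by
              intro j
              rcases lt_trichotomy (j : ℕ) n with hj | hj | hj
              · have hjm : j ≠ m := fun hh => by rw [hh, hmval] at hj; omega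
                simp [hi, hj, hjm]
              · have hjm : j = m := Fin.ext (by rw [hmval]; exact hj)
                have e1 : ¬((i : ℕ) < n ∧ (j : ℕ) < n) := by omega
                have hz : d' i m = 0 := hd0' i m (by rw [hmval]; omega)
                simp [e1, hi, hj, hjm, hz, hmval]
              · have hjm : j ≠ m := fun hh => by rw [hh, hmval] at hj; omega
                have e1 : ¬((i : ℕ) < n ∧ (j : ℕ) < n) := by omega
                have e2 : ¬((i : ℕ) < n ∧ (j : ℕ) = n) := by omega
                have e3 : ¬((i : ℕ) = n ∧ (j : ℕ) < n) := by omega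
                simp [e1, e2, e3, hjm, hd0' i j e1]
            have key : c i - ∑ j : Fin k,
                (if (i : ℕ) < n ∧ (j : ℕ) < n then d' i j
                  else if (i : ℕ) < n ∧ (j : ℕ) = n then -(e i)
                  else if (i : ℕ) = n ∧ (j : ℕ) < n then e j
                  else 0) * f j
                = c' i - ∑ j, d' i j * f j := by
              rw [Finset.sum_congr rfl fun j _ => hstep j, Finset.sum_add_distrib]
              have hs : ∑ j, (if j = m then -(e i) else 0) * f j = -(e i) * f m := by
                simp [ite_mul]
              rw [hs]
              have hci : c' i = c i + e i * f m := by simp [hc', hc₀, hi]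
              rw [hci, neg_mul]
              abel
            rw [key]
            exact hd3' i
          · -- i = n
            have him : i = m := Fin.ext (by rw [hmval]; exact hi)
            have hstep : ∀ j : Fin k,
                (if (i : ℕ) < n ∧ (j : ℕ) < n then d' i j
                  else if (i : ℕ) < n ∧ (j : ℕ) = n then -(e i)
                  else if (i : ℕ) = n ∧ (j : ℕ) < n then e j
                  else 0) = e j := by
              intro j
              split_ifs with h1 h2 h3
              · exfalso; omega
              · exfalso; omega
              · rfl
              · exact (hesupp' j (by omega)).symm
            rw [Finset.sum_congr rfl fun j _ => by rw [hstep j]]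
            rw [him]
            exact ⟨u₁, he⟩
          · -- i > n
            have hstep : ∀ j : Fin k,
                (if (i : ℕ) < n ∧ (j : ℕ) < n then d' i j
                  else if (i : ℕ) < n ∧ (j : ℕ) = n then -(e i)
                  else if (i : ℕ) = n ∧ (j : ℕ) < n then e j
                  else 0) = 0 := by
              intro j
              split_ifs with h1 h2 h3
              · exfalso; omega
              · exfalso; omega
              · exfalso; omega
              · rfl
            rw [Finset.sum_congr rfl fun j _ => by rw [hstep j]]
            exact ⟨0, by simp [hc i (by omega)]⟩
      · -- n ≥ k : trivial by IH
        have hc' : ∀ i : Fin k, n ≤ (i : ℕ) → c i = 0 := fun i hi =>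
          absurd i.isLt (by omega)
        obtain ⟨d, hd0, hd1, hd2, hd3⟩ := ih c hc' ⟨u, hu⟩
        exact ⟨d, fun i j hij => hd0 i j (by omega), hd1, hd2, hd3⟩

/-- Pairing lemma: a double sum `∑ᵢⱼ Xᵢⱼ` where symmetrizations and diagonal terms
are in `h • P` is itself in `h • P`. -/
private lemma aux_pair {A : Type*} [Ring A] (h : A) {k : ℕ} (P : Submodule A A)
    (X : Fin k → Fin k → A)
    (hoff : ∀ i j : Fin k, i ≠ j → ∃ w ∈ P, X i j + X j i = h * w)
    (hdiag : ∀ i : Fin k, ∃ w ∈ P, X i i = h * w) :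
    ∃ w ∈ P, ∑ i, ∑ j, X i j = h * w := by
  classical
  set T : Fin k → Fin k → A := fun i j =>
    if i < j then X i j + X j i else if i = j then X i i else 0 with hT
  have hTmem : ∀ i j : Fin k, ∃ w ∈ P, T i j = h * w := by
    intro i j
    simp only [hT]
    split_ifs with h1 h2
    · exact hoff i j (ne_of_lt h1)
    · subst h2; exact hdiag i
    · exact ⟨0, P.zero_mem, by simp⟩
  have hsum : ∑ i, ∑ j, X i j = ∑ i, ∑ j, T i j := by
    have e1 : ∀ i j : Fin k, X i j =
        (if i < j then X i j else 0) + (if j < i then X i j else 0)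
          + (if i = j then X i j else 0) := by
      intro i j
      rcases lt_trichotomy i j with hij | hij | hij
      · simp [hij, lt_asymm hij, ne_of_lt hij]
      · simp [hij, lt_irrefl]
      · simp [hij, lt_asymm hij, (ne_of_lt hij).symm]
    have e2 : ∀ i j : Fin k, T i j =
        (if i < j then X i j else 0) + (if i < j then X j i else 0)
          + (if i = j then X i j else 0) := by
      intro i j
      simp only [hT]
      rcases lt_trichotomy i j with hij | hij | hij
      · simp [hij, ne_of_lt hij]
      · simp [hij, lt_irrefl]
      · simp [hij, lt_asymm hij, (ne_of_lt hij).symm]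
    calc ∑ i, ∑ j, X i j
        = ∑ i : Fin k, ∑ j : Fin k, ((if i < j then X i j else 0)
            + (if j < i then X i j else 0) + (if i = j then X i j else 0)) := by
          exact Finset.sum_congr rfl fun i _ => Finset.sum_congr rfl fun j _ => e1 i j
      _ = (∑ i : Fin k, ∑ j : Fin k, if i < j then X i j else 0)
            + (∑ i : Fin k, ∑ j : Fin k, if j < i then X i j else 0)
            + (∑ i : Fin k, ∑ j : Fin k, if i = j then X i j else 0) := by
          simp [Finset.sum_add_distrib]
      _ = (∑ i : Fin k, ∑ j : Fin k, if i < j then X i j else 0)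
            + (∑ i : Fin k, ∑ j : Fin k, if i < j then X j i else 0)
            + (∑ i : Fin k, ∑ j : Fin k, if i = j then X i j else 0) := by
          congr 1
          congr 1
          rw [Finset.sum_comm]
      _ = ∑ i, ∑ j, T i j := by
          rw [← Finset.sum_add_distrib, ← Finset.sum_add_distrib]
          refine Finset.sum_congr rfl fun i _ => ?_
          rw [← Finset.sum_add_distrib, ← Finset.sum_add_distrib]
          exact (Finset.sum_congr rfl fun j _ => (e2 i j).symm)
  rw [hsum]
  refine aux_hsum h P Finset.univ _ fun i _ => ?_
  exact aux_hsum h P Finset.univ _ fun j _ => hTmem i j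

/-- Let `A` be an associative unital ring and `ℏ = h ∈ A` a central non-zero-divisor such
that `A/ℏA` is commutative (every commutator lies in `ℏA`). Let `f : Fin k → A` be
elements whose images in `A/ℏA` form a regular sequence, and let `I` be the left ideal of
`A` generated by the `f i`. If all commutators `f i * f j − f j * f i` lie in `ℏI`, then
`I` is ℏ-saturated: `ℏa ∈ I` implies `a ∈ I`. -/
theorem stmt6 (A : Type*) [Ring A] (h : A)
    (hcentral : ∀ a : A, h * a = a * h)
    (hnzd : ∀ a : A, h * a = 0 → a = 0)
    (hcommA : ∀ a b : A, ∃ c : A, a * b - b * a = h * c)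
    (k : ℕ) (f : Fin k → A)
    -- the images `f̄ i` form a regular sequence in `A/hA`:
    (hreg : ∀ m : Fin k, ∀ a : A,
      f m * a ∈ Submodule.span A ({h} ∪ f '' {i : Fin k | i < m}) →
      a ∈ Submodule.span A ({h} ∪ f '' {i : Fin k | i < m}))
    (hproper : (1 : A) ∉ Submodule.span A ({h} ∪ Set.range f))
    -- all commutators `f i * f j − f j * f i` lie in `ℏI`:
    (hcommf : ∀ i j : Fin k, ∃ c ∈ Submodule.span A (Set.range f),
      f i * f j - f j * f i = h * c)
    (a : A) (ha : h * a ∈ Submodule.span A (Set.range f)) :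
    a ∈ Submodule.span A (Set.range f) := by
  classical
  set I := Submodule.span A (Set.range f) with hIdef
  obtain ⟨c, hc⟩ := (Submodule.mem_span_range_iff_exists_fun A).mp ha
  simp only [smul_eq_mul] at hc
  obtain ⟨d, hd0, hd1, hd2, hd3⟩ := aux_syz hcentral hcommA hreg k c
    (fun i hi => absurd i.isLt (by omega)) ⟨a, hc⟩
  choose uu huu using hd3
  have hfI : ∀ i : Fin k, f i ∈ I := fun i => Submodule.subset_span ⟨i, rfl⟩
  have hmulI : ∀ (b : A) (x : A), x ∈ I → b * x ∈ I := fun b x hx => by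
    rw [← smul_eq_mul]; exact Submodule.smul_mem _ _ hx
  -- the double sum term
  have hXpair : ∀ i j : Fin k, i ≠ j →
      ∃ w ∈ I, (d i j * f j * f i) + (d j i * f i * f j) = h * w := by
    intro i j hij
    obtain ⟨w, hwI, hw⟩ := hcommf j i
    obtain ⟨u₂, hu₂⟩ := hd1 i j
    refine ⟨d i j * w + u₂ * (f i * f j), ?_, ?_⟩
    · refine I.add_mem (hmulI _ _ hwI) ?_
      have : u₂ * (f i * f j) = (u₂ * f i) * f j := by rw [mul_assoc]
      rw [this]
      exact hmulI _ _ (hfI j)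
    · have e1 : d j i = h * u₂ - d i j := by rw [← hu₂]; abel
      calc d i j * f j * f i + d j i * f i * f j
          = d i j * (f j * f i) + (h * u₂ - d i j) * (f i * f j) := by
            rw [e1, mul_assoc, mul_assoc]
        _ = d i j * (f j * f i - f i * f j) + h * (u₂ * (f i * f j)) := by noncomm_ring
        _ = d i j * (h * w) + h * (u₂ * (f i * f j)) := by rw [hw]
        _ = h * (d i j * w) + h * (u₂ * (f i * f j)) := by
            rw [← mul_assoc, ← hcentral, mul_assoc]
        _ = h * (d i j * w + u₂ * (f i * f j)) := (mul_add _ _ _).symm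
  have hXdiag : ∀ i : Fin k, ∃ w ∈ I, d i i * f i * f i = h * w := by
    intro i
    obtain ⟨u₂, hu₂⟩ := hd2 i
    refine ⟨u₂ * f i * f i, ?_, ?_⟩
    · exact hmulI _ _ (hfI i)
    · rw [hu₂]; noncomm_ring
  obtain ⟨w₂, hw₂I, hw₂⟩ := aux_pair h I (fun i j => d i j * f j * f i) hXpair hXdiag
  -- assemble
  have hsplit : h * a = h * ((∑ i, uu i * f i) + w₂) := by
    calc h * a = ∑ i, c i * f i := hc.symm
      _ = ∑ i, ((c i - ∑ j, d i j * f j) * f i + (∑ j, d i j * f j) * f i) := by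
          exact Finset.sum_congr rfl fun i _ => by rw [sub_mul, sub_add_cancel]
      _ = ∑ i, (c i - ∑ j, d i j * f j) * f i + ∑ i, (∑ j, d i j * f j) * f i := by
          rw [Finset.sum_add_distrib]
      _ = ∑ i, (h * uu i) * f i + ∑ i, ∑ j, d i j * f j * f i := by
          congr 1
          · exact Finset.sum_congr rfl fun i _ => by rw [huu i]
          · exact Finset.sum_congr rfl fun i _ => by rw [Finset.sum_mul]
      _ = h * (∑ i, uu i * f i) + h * w₂ := by
          rw [hw₂, Finset.mul_sum]
          congr 1
          exact Finset.sum_congr rfl fun i _ => (mul_assoc _ _ _)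
      _ = h * ((∑ i, uu i * f i) + w₂) := (mul_add _ _ _).symm
  have hzero : h * (a - ((∑ i, uu i * f i) + w₂)) = 0 := by
    rw [mul_sub, hsplit, sub_self]
  have haeq : a = (∑ i, uu i * f i) + w₂ :=
    sub_eq_zero.mp (hnzd _ hzero)
  rw [haeq]
  exact I.add_mem (Submodule.sum_mem _ fun i _ => hmulI _ _ (hfI i)) hw₂I
end

section
/- Fix an integer N ≥ 2. Let E be a finite-dimensional unital associative ℂ-algebra together with idempotents e_1,…,e_N satisfying e_i e_j = δ_{ij} e_i and e_1 + … + e_N = 1, such that: (i) e_1 E e_1 = ℂ e_1; (ii) dim_ℂ e_i E e_i = 2 for 2 ≤ i ≤ N; (iii) dim_ℂ e_i E e_j = 1 when |i − j| = 1, and e_i E e_j = 0 when |i − j| ≥ 2; (iv) for each 1 ≤ i ≤ N−1 and all nonzero x ∈ e_i E e_{i+1} and y ∈ e_{i+1} E e_i, the product y·x is a nonzero nilpotent element of e_{i+1} E e_{i+1}, and, when additionally i ≥ 2, the product x·y is a nonzero nilpotent element of e_i E e_i. Then the data (E, (e_i)) is unique up to isomorphism: if (E, (e_i)) and (E', (e'_i))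 both satisfy (i)–(iv) for the same N, there exists a ℂ-algebra isomorphism E → E' sending e_i to e'_i for every i. In particular dim_ℂ E = 4N − 3. -/
/-- The "corner" subspace `x·E·y = {x a y : a ∈ E}` of a ℂ-algebra `E`. -/
noncomputable def corner (E : Type*) [Ring E] [Algebra ℂ E] (x y : E) : Submodule ℂ E :=
  LinearMap.range ((LinearMap.mulRight ℂ y).comp (LinearMap.mulLeft ℂ x))

/-- The conditions (i)–(iv) on a ℂ-algebra `E` with a complete family of orthogonal
idempotents `e_1, …, e_N` (zero-indexed as `e 0, …, e (N-1)`):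
(i) `e_1 E e_1 = ℂ e_1`; (ii) `dim e_i E e_i = 2` for `2 ≤ i ≤ N`;
(iii) `dim e_i E e_j = 1` for `|i−j| = 1` and `e_i E e_j = 0` for `|i−j| ≥ 2`;
(iv) for nonzero `x ∈ e_i E e_{i+1}` and `y ∈ e_{i+1} E e_i`, the product `y·x` is a
nonzero nilpotent, and so is `x·y` when moreover `i ≥ 2`. -/
def CornerData (N : ℕ) (hN : 2 ≤ N) (E : Type*) [Ring E] [Algebra ℂ E]
    (e : Fin N → E) : Prop :=
  (∀ i j : Fin N, e i * e j = if i = j then e i else 0) ∧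
  (∑ i : Fin N, e i = 1) ∧
  -- (i)
  (∀ a : E, ∃ c : ℂ, e ⟨0, by omega⟩ * a * e ⟨0, by omega⟩ = c • e ⟨0, by omega⟩) ∧
  -- (ii)
  (∀ i : Fin N, 1 ≤ (i : ℕ) → Module.finrank ℂ (corner E (e i) (e i)) = 2) ∧
  -- (iii)
  (∀ i j : Fin N, ((i : ℕ) + 1 = (j : ℕ) ∨ (j : ℕ) + 1 = (i : ℕ)) →
    Module.finrank ℂ (corner E (e i) (e j)) = 1) ∧
  (∀ i j : Fin N, ((i : ℕ) + 2 ≤ (j : ℕ) ∨ (j : ℕ) + 2 ≤ (i : ℕ)) →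
    corner E (e i) (e j) = ⊥) ∧
  -- (iv)
  (∀ (i : ℕ) (hi : i + 1 < N),
    ∀ x ∈ corner E (e ⟨i, by omega⟩) (e ⟨i + 1, hi⟩), x ≠ 0 →
    ∀ y ∈ corner E (e ⟨i + 1, hi⟩) (e ⟨i, by omega⟩), y ≠ 0 →
      (y * x ≠ 0 ∧ IsNilpotent (y * x) ∧
        (1 ≤ i → (x * y ≠ 0 ∧ IsNilpotent (x * y)))))

set_option linter.unusedSectionVars false
set_option maxHeartbeats 1000000

namespace Stmt10Aux
open Module Submodule

variable {E : Type*} [Ring E] [Algebra ℂ E]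

lemma corner_mem_iff {x y w : E} : w ∈ corner E x y ↔ ∃ a, x * a * y = w := by
  simp [corner, LinearMap.mem_range]

variable {N : ℕ} {e : Fin N → E}

lemma idem (horth : ∀ i j : Fin N, e i * e j = if i = j then e i else 0) (i : Fin N) :
    e i * e i = e i := by simpa using horth i i

lemma mem_corner_iff (horth : ∀ i j : Fin N, e i * e j = if i = j then e i else 0)
    (i j : Fin N) {w : E} : w ∈ corner E (e i) (e j) ↔ e i * w * e j = w := by
  rw [corner_mem_iff]
  constructor
  · rintro ⟨a, rfl⟩
    calc e i * (e i * a * e j) * e j = (e i * e i) * a * (e j * e j) := by noncomm_ring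
    _ = e i * a * e j := by rw [idem horth i, idem horth j]
  · intro h; exact ⟨w, h⟩

lemma left_eat (horth : ∀ i j : Fin N, e i * e j = if i = j then e i else 0)
    {i j : Fin N} {w : E} (hw : w ∈ corner E (e i) (e j)) (p : Fin N) :
    e p * w = if p = i then w else 0 := by
  rw [mem_corner_iff horth] at hw
  by_cases hpi : p = i
  · subst hpi; rw [if_pos rfl]
    calc e p * w = e p * (e p * w * e j) := by rw [hw]
    _ = (e p * e p) * w * e j := by noncomm_ring
    _ = e p * w * e j := by rw [idem horth p]
    _ = w := hw
  · rw [if_neg hpi]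
    calc e p * w = e p * (e i * w * e j) := by rw [hw]
    _ = (e p * e i) * (w * e j) := by noncomm_ring
    _ = 0 := by rw [horth p i, if_neg hpi, zero_mul]

lemma right_eat (horth : ∀ i j : Fin N, e i * e j = if i = j then e i else 0)
    {i j : Fin N} {w : E} (hw : w ∈ corner E (e i) (e j)) (q : Fin N) :
    w * e q = if q = j then w else 0 := by
  rw [mem_corner_iff horth] at hw
  by_cases hqj : q = j
  · subst hqj; rw [if_pos rfl]
    calc w * e q = (e i * w * e q) * e q := by rw [hw]
    _ = e i * w * (e q * e q) := by noncomm_ring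
    _ = e i * w * e q := by rw [idem horth q]
    _ = w := hw
  · rw [if_neg hqj]
    calc w * e q = (e i * w * e j) * e q := by rw [hw]
    _ = (e i * w) * (e j * e q) := by noncomm_ring
    _ = 0 := by rw [horth j q, if_neg (fun h => hqj h.symm), mul_zero]

lemma left_unit (horth : ∀ i j : Fin N, e i * e j = if i = j then e i else 0)
    {i j : Fin N} {w : E} (hw : w ∈ corner E (e i) (e j)) : e i * w = w := by
  simpa using left_eat horth hw i

lemma right_unit (horth : ∀ i j : Fin N, e i * e j = if i = j then e i else 0)
    {i j : Fin N} {w : E} (hw : w ∈ corner E (e i) (e j)) : w * e j = w := by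
  simpa using right_eat horth hw j

lemma mul_corner_mem (horth : ∀ i j : Fin N, e i * e j = if i = j then e i else 0)
    {i j l : Fin N} {w v : E} (hw : w ∈ corner E (e i) (e j)) (hv : v ∈ corner E (e j) (e l)) :
    w * v ∈ corner E (e i) (e l) := by
  rw [mem_corner_iff horth]
  calc e i * (w * v) * e l = (e i * w) * (v * e l) := by noncomm_ring
  _ = w * v := by rw [left_unit horth hw, right_unit horth hv]

lemma mul_corner_zero (horth : ∀ i j : Fin N, e i * e j = if i = j then e i else 0)
    {i j j' l : Fin N} {w v : E} (hw : w ∈ corner E (e i) (e j))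
    (hv : v ∈ corner E (e j') (e l)) (h : j ≠ j') : w * v = 0 := by
  have h1 : w * e j = w := right_unit horth hw
  have h2 : e j * v = 0 := by rw [left_eat horth hv j, if_neg h]
  calc w * v = (w * e j) * v := by rw [h1]
  _ = w * (e j * v) := by rw [mul_assoc]
  _ = 0 := by rw [h2, mul_zero]

lemma pow_idem {a : E} (ha : a * a = a) : ∀ n, 1 ≤ n → a ^ n = a := by
  intro n hn
  induction n with
  | zero => omega
  | succ k ih =>
    rcases Nat.eq_zero_or_pos k with h | h
    · subst h; rw [pow_one]
    · rw [pow_succ, ih h, ha]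

lemma not_nilp_idem {a : E} (ha : a * a = a) (h0 : a ≠ 0) : ¬ IsNilpotent a := by
  rintro ⟨n, hn⟩
  rcases Nat.eq_zero_or_pos n with h | h
  · subst h; rw [pow_zero] at hn
    exact h0 (by rw [← mul_one a, hn, mul_zero])
  · exact h0 (by rw [← pow_idem ha n h, hn])

lemma smul_cancel {t : ℂ} {z : E} (h : t • z = 0) (ht : t ≠ 0) : z = 0 := by
  have := congrArg (fun u : E => t⁻¹ • u) h
  simpa [smul_smul, inv_mul_cancel₀ ht] using this

lemma smul_nilp_zero {c : ℂ} {a : E} (ha : a * a = a) (h0 : a ≠ 0)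
    (h : IsNilpotent (c • a)) : c = 0 := by
  by_contra hc
  apply not_nilp_idem ha h0
  have : a = c⁻¹ • (c • a) := by rw [smul_smul, inv_mul_cancel₀ hc, one_smul]
  rw [this]
  exact h.smul _

lemma sq_smul_self {w : E} {c : ℂ} (h0 : w ≠ 0) (hn : IsNilpotent w)
    (h : w * w = c • w) : c = 0 := by
  by_contra hc
  have key : ∀ n, 1 ≤ n → w ^ n = c ^ (n - 1) • w := by
    intro n hn1
    induction n with
    | zero => omega
    | succ k ih =>
      rcases Nat.eq_zero_or_pos k with h' | h'
      · subst h'; simp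
      · rw [pow_succ, ih h', smul_mul_assoc, h, smul_smul]
        congr 1
        rw [← pow_succ]
        congr 1
        omega
  obtain ⟨n, hn0⟩ := hn
  have h1 : (1 : ℕ) ≤ n := by
    rcases Nat.eq_zero_or_pos n with h' | h'
    · exfalso; subst h'; rw [pow_zero] at hn0
      exact h0 (by rw [← mul_one w, hn0, mul_zero])
    · exact h'
  have h2 := key n h1
  rw [hn0] at h2
  exact h0 (smul_cancel h2.symm (pow_ne_zero _ hc))

lemma pair_indep {a z : E} (ha : a * a = a) (ha0 : a ≠ 0)
    (hz : IsNilpotent z) (hz0 : z ≠ 0) : LinearIndependent ℂ ![a, z] := by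
  rw [LinearIndependent.pair_iff]
  intro s t hst
  have hs : s = 0 := by
    have h1 : s • a = -(t • z) := eq_neg_of_add_eq_zero_left hst
    have hnil : IsNilpotent (s • a) := by rw [h1]; exact (hz.smul t).neg
    exact smul_nilp_zero ha ha0 hnil
  refine ⟨hs, ?_⟩
  rw [hs, zero_smul, zero_add] at hst
  by_contra ht
  exact hz0 (smul_cancel hst ht)

lemma nilp_mem_span_pair {a z w : E} (ha : a * a = a) (ha0 : a ≠ 0)
    (haz : a * z = z) (hza : z * a = z) (hz : IsNilpotent z) (hw : IsNilpotent w)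
    (hmem : w ∈ Submodule.span ℂ {a, z}) : ∃ c : ℂ, w = c • z := by
  obtain ⟨s, t, hst⟩ := Submodule.mem_span_pair.mp hmem
  refine ⟨t, ?_⟩
  have hcomm : Commute w (t • z) := by
    rw [← hst]
    show (s • a + t • z) * (t • z) = (t • z) * (s • a + t • z)
    simp only [add_mul, mul_add, smul_mul_assoc, mul_smul_comm, haz, hza, smul_smul, smul_add]
    ring_nf
  have hnil : IsNilpotent (w - t • z) := hcomm.isNilpotent_sub hw (hz.smul t)
  have hsa : w - t • z = s • a := by rw [← hst]; abel
  rw [hsa] at hnil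
  have hs0 := smul_nilp_zero ha ha0 hnil
  rw [hs0, zero_smul, zero_add] at hst
  exact hst.symm

lemma sq_eq_zero {a z : E} (ha : a * a = a) (ha0 : a ≠ 0)
    (haz : a * z = z) (hza : z * a = z) (hz : IsNilpotent z) (hz0 : z ≠ 0)
    (hmem : z * z ∈ Submodule.span ℂ {a, z}) : z * z = 0 := by
  have hsq : IsNilpotent (z * z) := (Commute.refl z).isNilpotent_mul_left hz
  obtain ⟨c, hc⟩ := nilp_mem_span_pair ha ha0 haz hza hz hsq hmem
  have hc0 := sq_smul_self hz0 hz hc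
  rw [hc0, zero_smul] at hc
  exact hc

variable [FiniteDimensional ℂ E]

lemma dim1_char {S : Submodule ℂ E} (h : finrank ℂ S = 1) {v : E} (hv : v ∈ S)
    (h0 : v ≠ 0) {w : E} (hw : w ∈ S) : ∃ c : ℂ, w = c • v := by
  have hle : (ℂ ∙ v) ≤ S := (Submodule.span_singleton_le_iff_mem _ _).mpr hv
  have heq : (ℂ ∙ v) = S :=
    Submodule.eq_of_le_of_finrank_le hle (by rw [h, finrank_span_singleton h0])
  rw [← heq] at hw
  obtain ⟨c, hc⟩ := Submodule.mem_span_singleton.mp hw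
  exact ⟨c, hc.symm⟩

lemma range_pair (a z : E) : Set.range ![a, z] = {a, z} := by
  ext u
  simp [Fin.exists_fin_two]
  tauto

lemma dim2_char {S : Submodule ℂ E} (h : finrank ℂ S = 2) {a z : E}
    (hma : a ∈ S) (hmz : z ∈ S) (hli : LinearIndependent ℂ ![a, z]) {w : E}
    (hw : w ∈ S) : w ∈ Submodule.span ℂ {a, z} := by
  have hle : Submodule.span ℂ {a, z} ≤ S := by
    rw [Submodule.span_le]
    rintro u (rfl | rfl) <;> simpa
  have hsp : Submodule.span ℂ {a, z} = Submodule.span ℂ (Set.range ![a, z]) := by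
    rw [range_pair]
  have heq : Submodule.span ℂ {a, z} = S := by
    refine Submodule.eq_of_le_of_finrank_le hle ?_
    rw [h, hsp, finrank_span_eq_card hli, Fintype.card_fin]
  rw [← heq] at hw
  exact hw

lemma exists_ne_zero {S : Submodule ℂ E} (h : finrank ℂ S ≠ 0) : ∃ v ∈ S, v ≠ 0 := by
  have hb : S ≠ ⊥ := by
    intro hbot
    apply h
    rw [hbot]
    simp
  exact (Submodule.ne_bot_iff S).mp hb

abbrev Idx (N : ℕ) := Fin N ⊕ (Fin (N-1) ⊕ (Fin (N-1) ⊕ Fin (N-1)))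

def lo {N : ℕ} (i : Fin (N-1)) : Fin N := ⟨i, by have := i.isLt; omega⟩
def up {N : ℕ} (i : Fin (N-1)) : Fin N := ⟨(i : ℕ) + 1, by have := i.isLt; omega⟩

def c1 {N : ℕ} : Idx N → Fin N
  | .inl p => p
  | .inr (.inl i) => up i
  | .inr (.inr (.inl i)) => lo i
  | .inr (.inr (.inr i)) => up i

def c2 {N : ℕ} : Idx N → Fin N
  | .inl p => p
  | .inr (.inl i) => up i
  | .inr (.inr (.inl i)) => up i
  | .inr (.inr (.inr i)) => lo i

noncomputable def tbl {N : ℕ} : Idx N → Idx N → Option (Idx N) := fun i j =>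
  match i, j with
  | .inl p, j => if p = c1 j then some j else none
  | i, .inl q => if c2 i = q then some i else none
  | .inr (.inr (.inl i)), .inr (.inr (.inr j)) =>
      if (i : ℕ) = (j : ℕ) ∧ 1 ≤ (i : ℕ)
      then some (.inr (.inl ⟨(i : ℕ) - 1, by have := i.isLt; omega⟩)) else none
  | .inr (.inr (.inr i)), .inr (.inr (.inl j)) =>
      if i = j then some (.inr (.inl i)) else none
  | _, _ => none



lemma e_mem_corner (horth : ∀ i j : Fin N, e i * e j = if i = j then e i else 0)
    (i : Fin N) : e i ∈ corner E (e i) (e i) := by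
  rw [mem_corner_iff horth, idem horth i, idem horth i]

lemma e_ne_zero {hN : 2 ≤ N} {e : Fin N → E} (hE : CornerData N hN E e) (p : Fin N) :
    e p ≠ 0 := by
  obtain ⟨horth, hsum, h00, hdiag, hadj, hfar, hiv⟩ := hE
  intro hp0
  rcases Nat.eq_zero_or_pos (p : ℕ) with h | h
  · have hd := hadj p ⟨1, by omega⟩ (Or.inl (by simpa using h))
    obtain ⟨v, hv, v0⟩ := exists_ne_zero (E := E) (by rw [hd]; omega)
    obtain ⟨a, ha⟩ := corner_mem_iff.mp hv
    exact v0 (by rw [← ha, hp0, zero_mul, zero_mul])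
  · have hd := hdiag p h
    obtain ⟨v, hv, v0⟩ := exists_ne_zero (E := E) (by rw [hd]; omega)
    obtain ⟨a, ha⟩ := corner_mem_iff.mp hv
    exact v0 (by rw [← ha, hp0, zero_mul, zero_mul])

lemma exists_xy {hN : 2 ≤ N} {e : Fin N → E} (hE : CornerData N hN E e) :
    ∃ x y : ℕ → E, ∀ i (hi : i + 1 < N),
      x i ∈ corner E (e ⟨i, by omega⟩) (e ⟨i+1, hi⟩) ∧ x i ≠ 0 ∧
      y i ∈ corner E (e ⟨i+1, hi⟩) (e ⟨i, by omega⟩) ∧ y i ≠ 0 ∧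
      (i = 0 → x i * y i = 0) ∧
      (∀ j, i = j + 1 → x i * y i = y j * x j) := by
  have hE' := hE
  obtain ⟨horth, hsum, h00, hdiag, hadj, hfar, hiv⟩ := hE'
  suffices h : ∀ n, ∃ x y : ℕ → E, ∀ i (hi : i + 1 < N), i < n →
      (x i ∈ corner E (e ⟨i, by omega⟩) (e ⟨i+1, hi⟩) ∧ x i ≠ 0 ∧
      y i ∈ corner E (e ⟨i+1, hi⟩) (e ⟨i, by omega⟩) ∧ y i ≠ 0 ∧
      (i = 0 → x i * y i = 0) ∧
      (∀ j, i = j + 1 → x i * y i = y j * x j)) by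
    obtain ⟨x, y, h⟩ := h N
    exact ⟨x, y, fun i hi => h i hi (by omega)⟩
  intro n
  induction n with
  | zero => exact ⟨0, 0, fun i hi h => absurd h (Nat.not_lt_zero i)⟩
  | succ n ih =>
    obtain ⟨x, y, hxy⟩ := ih
    by_cases hn : n + 1 < N
    · -- choose new elements at index n
      have hfin1 : finrank ℂ (corner E (e ⟨n, by omega⟩) (e ⟨n+1, hn⟩)) = 1 :=
        hadj _ _ (Or.inl rfl)
      have hfin1' : finrank ℂ (corner E (e ⟨n+1, hn⟩) (e ⟨n, by omega⟩)) = 1 :=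
        hadj _ _ (Or.inr rfl)
      obtain ⟨x', hx'm, hx'0⟩ := exists_ne_zero (E := E) (by rw [hfin1]; omega)
      obtain ⟨yn, hynm, hyn0⟩ := exists_ne_zero (E := E) (by rw [hfin1']; omega)
      rcases Nat.eq_zero_or_pos n with h0 | hpos
      · subst h0
        have hx0y0 : x' * yn = 0 := by
          obtain ⟨a, ha⟩ := corner_mem_iff.mp (mul_corner_mem horth hx'm hynm)
          obtain ⟨c, hc⟩ := h00 a
          have hxy' : x' * yn = c • e ⟨0, by omega⟩ := by rw [← ha]; exact hc
          obtain ⟨hw0, hwn, -⟩ := hiv 0 hn x' hx'm hx'0 yn hynm hyn0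
          have hsq : (yn * x') * (yn * x') = c • (yn * x') := by
            calc (yn * x') * (yn * x') = yn * (x' * yn) * x' := by noncomm_ring
            _ = yn * (c • e ⟨0, by omega⟩) * x' := by rw [hxy']
            _ = c • (yn * e ⟨0, by omega⟩ * x') := by
                rw [mul_smul_comm, smul_mul_assoc]
            _ = c • (yn * x') := by rw [right_unit horth hynm]
          have hc0 := sq_smul_self hw0 hwn hsq
          rw [hxy', hc0, zero_smul]
        refine ⟨Function.update x 0 x', Function.update y 0 yn, ?_⟩
        intro i hi hlt
        have hi0 : i = 0 := by omega
        subst hi0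
        simp only [Function.update_self]
        exact ⟨hx'm, hx'0, hynm, hyn0, fun _ => hx0y0, fun j hj => by omega⟩
      · obtain ⟨m, rfl⟩ : ∃ m, n = m + 1 := ⟨n - 1, by omega⟩
        obtain ⟨hxm, hxm0, hym, hym0, -, -⟩ := hxy m (by omega) (by omega)
        obtain ⟨hz0, hzn, -⟩ := hiv m (by omega) (x m) hxm hxm0 (y m) hym hym0
        have hzmem : y m * x m ∈
            corner E (e ⟨m+1, by omega⟩) (e ⟨m+1, by omega⟩) :=
          mul_corner_mem horth hym hxm
        obtain ⟨-, -, hiv2⟩ := hiv (m+1) hn x' hx'm hx'0 yn hynm hyn0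
        obtain ⟨hxy0, hxyn⟩ := hiv2 (by omega)
        have hfin2 : finrank ℂ
            (corner E (e ⟨m+1, by omega⟩) (e ⟨m+1, by omega⟩)) = 2 :=
          hdiag ⟨m+1, by omega⟩ (by simp)
        have hen : e (⟨m+1, by omega⟩ : Fin N) ≠ 0 := e_ne_zero hE _
        have hemem := e_mem_corner horth (⟨m+1, by omega⟩ : Fin N)
        have hxymem : x' * yn ∈
            corner E (e ⟨m+1, by omega⟩) (e ⟨m+1, by omega⟩) :=
          mul_corner_mem horth hx'm hynm
        have hsp : x' * yn ∈ span ℂ {e (⟨m+1, by omega⟩ : Fin N), y m * x m} :=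
          dim2_char hfin2 hemem hzmem
            (pair_indep (idem horth _) hen hzn hz0) hxymem
        obtain ⟨c, hc⟩ := nilp_mem_span_pair (idem horth _) hen
          (left_unit horth hzmem) (right_unit horth hzmem) hzn hxyn hsp
        have hc0 : c ≠ 0 := by rintro rfl; rw [zero_smul] at hc; exact hxy0 hc
        refine ⟨Function.update x (m+1) (c⁻¹ • x'), Function.update y (m+1) yn, ?_⟩
        intro i hi hlt
        by_cases him : i = m + 1
        · subst him
          simp only [Function.update_self]
          refine ⟨smul_mem _ _ hx'm, smul_ne_zero (inv_ne_zero hc0) hx'0,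
            hynm, hyn0, fun h => by omega, ?_⟩
          intro j hj
          have hjm : j = m := by omega
          subst hjm
          rw [Function.update_of_ne (by omega), Function.update_of_ne (by omega)]
          rw [smul_mul_assoc, hc, smul_smul, inv_mul_cancel₀ hc0, one_smul]
        · have hilt : i < m + 1 := by omega
          obtain ⟨p1, p2, p3, p4, p5, p6⟩ := hxy i hi (by omega)
          rw [Function.update_of_ne him, Function.update_of_ne him]
          refine ⟨p1, p2, p3, p4, p5, ?_⟩
          intro j hj
          rw [Function.update_of_ne (by omega), Function.update_of_ne (by omega)]
          exact p6 j hj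
    · exact ⟨x, y, fun i hi hlt => hxy i hi (by omega)⟩



lemma exists_basis {hN : 2 ≤ N} {e : Fin N → E} (hE : CornerData N hN E e) :
    ∃ b : Idx N → E, (∀ p, b (.inl p) = e p) ∧ LinearIndependent ℂ b ∧
      ⊤ ≤ Submodule.span ℂ (Set.range b) ∧
      (∀ i j, b i * b j = (tbl i j).elim 0 b) := by
  have hEc := hE
  obtain ⟨horth, hsum, h00, hdiag, hadj, hfar, hiv⟩ := hEc
  obtain ⟨x, y, hxy⟩ := exists_xy hE
  have hlt : ∀ j : Fin (N-1), (j : ℕ) + 1 < N := fun j => by have := j.isLt; omega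
  -- component facts
  have hXm : ∀ m (hm : m+1 < N), x m ∈ corner E (e ⟨m, by omega⟩) (e ⟨m+1, hm⟩) :=
    fun m hm => (hxy m hm).1
  have hX0 : ∀ m (hm : m+1 < N), x m ≠ 0 := fun m hm => (hxy m hm).2.1
  have hYm : ∀ m (hm : m+1 < N), y m ∈ corner E (e ⟨m+1, hm⟩) (e ⟨m, by omega⟩) :=
    fun m hm => (hxy m hm).2.2.1
  have hY0 : ∀ m (hm : m+1 < N), y m ≠ 0 := fun m hm => (hxy m hm).2.2.2.1
  have hZm : ∀ m (hm : m+1 < N), y m * x m ∈ corner E (e ⟨m+1, hm⟩) (e ⟨m+1, hm⟩) :=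
    fun m hm => mul_corner_mem horth (hYm m hm) (hXm m hm)
  have hZprop : ∀ m (hm : m+1 < N), y m * x m ≠ 0 ∧ IsNilpotent (y m * x m) := by
    intro m hm
    obtain ⟨h1, h2, -⟩ := hiv m hm (x m) (hXm m hm) (hX0 m hm) (y m) (hYm m hm) (hY0 m hm)
    exact ⟨h1, h2⟩
  have hrel0 : x 0 * y 0 = 0 := (hxy 0 (by omega)).2.2.2.2.1 rfl
  have hrelS : ∀ m (hm : m + 1 + 1 < N), x (m+1) * y (m+1) = y m * x m :=
    fun m hm => (hxy (m+1) hm).2.2.2.2.2 m rfl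
  -- zero-product helpers
  have hmul0 : ∀ {a c a' c' : ℕ} {ha : a < N} {hc : c < N} {ha' : a' < N} {hc' : c' < N}
      {w v : E}, w ∈ corner E (e ⟨a, ha⟩) (e ⟨c, hc⟩) →
      v ∈ corner E (e ⟨a', ha'⟩) (e ⟨c', hc'⟩) → c ≠ a' → w * v = 0 := by
    intro a c a' c' ha hc ha' hc' w v hw hv h
    exact mul_corner_zero horth hw hv (fun hh => h (congrArg (Fin.val : Fin N → ℕ) hh))
  have hfar0 : ∀ {a c : ℕ} {ha : a < N} {hc : c < N} {w : E},
      w ∈ corner E (e ⟨a, ha⟩) (e ⟨c, hc⟩) → (a + 2 ≤ c ∨ c + 2 ≤ a) → w = 0 := by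
    intro a c ha hc w hw hcond
    rw [hfar _ _ hcond] at hw
    simpa using hw
  have hxx : ∀ m m' (hm : m+1 < N) (hm' : m'+1 < N), x m * x m' = 0 := by
    intro m m' hm hm'
    by_cases h : m + 1 = m'
    · subst h
      exact hfar0 (mul_corner_mem horth (hXm m hm) (hXm (m+1) hm')) (Or.inl (le_refl _))
    · exact hmul0 (hXm m hm) (hXm m' hm') h
  have hyy : ∀ m m' (hm : m+1 < N) (hm' : m'+1 < N), y m * y m' = 0 := by
    intro m m' hm hm'
    by_cases h : m = m' + 1
    · subst h
      exact hfar0 (mul_corner_mem horth (hYm (m'+1) hm) (hYm m' hm')) (Or.inr (le_refl _))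
    · exact hmul0 (hYm m hm) (hYm m' hm') h
  have hzx : ∀ m m' (hm : m+1 < N) (hm' : m'+1 < N), (y m * x m) * x m' = 0 := by
    intro m m' hm hm'
    rw [mul_assoc, hxx m m' hm hm', mul_zero]
  have hyz : ∀ m m' (hm : m+1 < N) (hm' : m'+1 < N), y m' * (y m * x m) = 0 := by
    intro m m' hm hm'
    rw [← mul_assoc, hyy m' m hm' hm, zero_mul]
  have hxz : ∀ m m' (hm : m+1 < N) (hm' : m'+1 < N), x m' * (y m * x m) = 0 := by
    intro m m' hm hm'
    rw [← mul_assoc]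
    by_cases h : m' = m
    · subst h
      cases m' with
      | zero => rw [hrel0, zero_mul]
      | succ k => rw [hrelS k hm, hzx k (k+1) (by omega) hm]
    · rw [hmul0 (hXm m' hm') (hYm m hm) (by omega), zero_mul]
  have hzy : ∀ m m' (hm : m+1 < N) (hm' : m'+1 < N), (y m * x m) * y m' = 0 := by
    intro m m' hm hm'
    rw [mul_assoc]
    by_cases h : m' = m
    · subst h
      cases m' with
      | zero => rw [hrel0, mul_zero]
      | succ k => rw [hrelS k hm, hyz k (k+1) (by omega) hm]
    · rw [hmul0 (hXm m hm) (hYm m' hm') (by omega), mul_zero]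
  have hzz : ∀ m (hm : m + 1 < N), (y m * x m) * (y m * x m) = 0 := by
    intro m hm
    obtain ⟨hz0, hzn⟩ := hZprop m hm
    exact sq_eq_zero (idem horth ⟨m+1, hm⟩) (e_ne_zero hE _)
      (left_unit horth (hZm m hm)) (right_unit horth (hZm m hm)) hzn hz0
      (dim2_char (hdiag ⟨m+1, hm⟩ (Nat.succ_le_succ (Nat.zero_le _)))
        (e_mem_corner horth _) (hZm m hm)
        (pair_indep (idem horth _) (e_ne_zero hE _) hzn hz0)
        (mul_corner_mem horth (hZm m hm) (hZm m hm)))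
  -- the basis family
  set b : Idx N → E := Sum.elim e (Sum.elim (fun j : Fin (N-1) => y (j : ℕ) * x (j : ℕ))
    (Sum.elim (fun j : Fin (N-1) => x (j : ℕ)) (fun j : Fin (N-1) => y (j : ℕ)))) with hbdef
  have bmem : ∀ i : Idx N, b i ∈ corner E (e (c1 i)) (e (c2 i)) := by
    rintro (p | j | j | j)
    · exact e_mem_corner horth p
    · exact hZm (j : ℕ) (hlt j)
    · exact hXm (j : ℕ) (hlt j)
    · exact hYm (j : ℕ) (hlt j)
  have bne : ∀ i : Idx N, b i ≠ 0 := by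
    rintro (p | j | j | j)
    · exact e_ne_zero hE p
    · exact (hZprop (j : ℕ) (hlt j)).1
    · exact hX0 (j : ℕ) (hlt j)
    · exact hY0 (j : ℕ) (hlt j)
  -- the multiplication table
  have htable : ∀ i j : Idx N, b i * b j = (tbl i j).elim 0 b := by
    intro i j
    rcases i with p | zi | xi | yi
    · -- e-row
      refine (left_eat horth (bmem j) p).trans ?_
      have htb : tbl (.inl p) j = if p = c1 j then some j else none := by
        rcases j with q | zj | xj | yj <;> rfl
      rw [htb]
      by_cases h : p = c1 j
      · rw [if_pos h, if_pos h]; rfl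
      · rw [if_neg h, if_neg h]; rfl
    · rcases j with q | zj | xj | yj
      · -- Z-e
        refine (right_eat horth (bmem (.inr (.inl zi))) q).trans ?_
        by_cases h : c2 (.inr (.inl zi) : Idx N) = q
        · rw [if_pos h.symm, show tbl (.inr (.inl zi) : Idx N) (.inl q) =
            if c2 (.inr (.inl zi) : Idx N) = q then some (.inr (.inl zi)) else none from rfl,
            if_pos h]; rfl
        · rw [if_neg (fun hh => h hh.symm), show tbl (.inr (.inl zi) : Idx N) (.inl q) =
            if c2 (.inr (.inl zi) : Idx N) = q then some (.inr (.inl zi)) else none from rfl,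
            if_neg h]; rfl
      · -- Z-Z
        show (y (zi:ℕ) * x (zi:ℕ)) * (y (zj:ℕ) * x (zj:ℕ)) = 0
        by_cases h : (zi : ℕ) = (zj : ℕ)
        · have hzz' : zi = zj := Fin.ext h
          subst hzz'
          exact hzz _ (hlt zi)
        · exact hmul0 (hZm _ (hlt zi)) (hZm _ (hlt zj)) (by omega)
      · -- Z-X
        show (y (zi:ℕ) * x (zi:ℕ)) * x (xj:ℕ) = 0
        exact hzx _ _ (hlt zi) (hlt xj)
      · -- Z-Y
        show (y (zi:ℕ) * x (zi:ℕ)) * y (yj:ℕ) = 0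
        exact hzy _ _ (hlt zi) (hlt yj)
    · rcases j with q | zj | xj | yj
      · -- X-e
        refine (right_eat horth (bmem (.inr (.inr (.inl xi)))) q).trans ?_
        by_cases h : c2 (.inr (.inr (.inl xi)) : Idx N) = q
        · rw [if_pos h.symm, show tbl (.inr (.inr (.inl xi)) : Idx N) (.inl q) =
            if c2 (.inr (.inr (.inl xi)) : Idx N) = q then some (.inr (.inr (.inl xi)))
            else none from rfl, if_pos h]; rfl
        · rw [if_neg (fun hh => h hh.symm), show tbl (.inr (.inr (.inl xi)) : Idx N) (.inl q) =
            if c2 (.inr (.inr (.inl xi)) : Idx N) = q then some (.inr (.inr (.inl xi)))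
            else none from rfl, if_neg h]; rfl
      · -- X-Z
        show x (xi:ℕ) * (y (zj:ℕ) * x (zj:ℕ)) = 0
        exact hxz _ _ (hlt zj) (hlt xi)
      · -- X-X
        show x (xi:ℕ) * x (xj:ℕ) = 0
        exact hxx _ _ (hlt xi) (hlt xj)
      · -- X-Y
        have htb : tbl (.inr (.inr (.inl xi)) : Idx N) (.inr (.inr (.inr yj))) =
            if (xi : ℕ) = (yj : ℕ) ∧ 1 ≤ (xi : ℕ)
            then some (.inr (.inl ⟨(xi : ℕ) - 1, by have := xi.isLt; omega⟩)) else none := rfl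
        rw [htb]
        by_cases h : (xi : ℕ) = (yj : ℕ)
        · rcases Nat.eq_zero_or_pos (xi : ℕ) with h0 | h0
          · rw [if_neg (by rintro ⟨-, hc⟩; omega)]
            show x (xi:ℕ) * y (yj:ℕ) = 0
            rw [h0, show (yj : ℕ) = 0 by omega]
            exact hrel0
          · rw [if_pos ⟨h, h0⟩]
            show x (xi:ℕ) * y (yj:ℕ) = y ((xi:ℕ) - 1) * x ((xi:ℕ) - 1)
            obtain ⟨k, hk⟩ : ∃ k, (xi : ℕ) = k + 1 := ⟨(xi:ℕ) - 1, by omega⟩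
            have hxilt := hlt xi
            rw [show (yj : ℕ) = (xi : ℕ) from h.symm, hk, Nat.add_sub_cancel]
            exact hrelS k (by omega)
        · rw [if_neg (by rintro ⟨h1, -⟩; exact h h1)]
          show x (xi:ℕ) * y (yj:ℕ) = 0
          exact hmul0 (hXm _ (hlt xi)) (hYm _ (hlt yj)) (by omega)
    · rcases j with q | zj | xj | yj
      · -- Y-e
        refine (right_eat horth (bmem (.inr (.inr (.inr yi)))) q).trans ?_
        by_cases h : c2 (.inr (.inr (.inr yi)) : Idx N) = q
        · rw [if_pos h.symm, show tbl (.inr (.inr (.inr yi)) : Idx N) (.inl q) =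
            if c2 (.inr (.inr (.inr yi)) : Idx N) = q then some (.inr (.inr (.inr yi)))
            else none from rfl, if_pos h]; rfl
        · rw [if_neg (fun hh => h hh.symm), show tbl (.inr (.inr (.inr yi)) : Idx N) (.inl q) =
            if c2 (.inr (.inr (.inr yi)) : Idx N) = q then some (.inr (.inr (.inr yi)))
            else none from rfl, if_neg h]; rfl
      · -- Y-Z
        show y (yi:ℕ) * (y (zj:ℕ) * x (zj:ℕ)) = 0
        exact hyz _ _ (hlt zj) (hlt yi)
      · -- Y-X
        have htb : tbl (.inr (.inr (.inr yi)) : Idx N) (.inr (.inr (.inl xj))) =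
            if yi = xj then some (.inr (.inl yi)) else none := rfl
        rw [htb]
        by_cases h : yi = xj
        · subst h; rw [if_pos rfl]; rfl
        · rw [if_neg h]
          show y (yi:ℕ) * x (xj:ℕ) = 0
          exact hmul0 (hYm _ (hlt yi)) (hXm _ (hlt xj)) (fun hh => h (Fin.ext hh))
      · -- Y-Y
        show y (yi:ℕ) * y (yj:ℕ) = 0
        exact hyy _ _ (hlt yi) (hlt yj)
  -- spanning
  have hspan : ⊤ ≤ Submodule.span ℂ (Set.range b) := by
    intro a _
    have e1 : (∑ p : Fin N, e p) * a * (∑ q : Fin N, e q)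
        = ∑ p : Fin N, ∑ q : Fin N, e p * a * e q := by
      rw [Finset.sum_mul, Finset.sum_mul]
      refine Finset.sum_congr rfl fun p _ => ?_
      rw [Finset.mul_sum]
    have expand : a = ∑ p : Fin N, ∑ q : Fin N, e p * a * e q := by
      rw [← e1, hsum, one_mul, mul_one]
    rw [expand]
    refine Submodule.sum_mem _ fun p _ => Submodule.sum_mem _ fun q _ => ?_
    have hw : e p * a * e q ∈ corner E (e p) (e q) := corner_mem_iff.mpr ⟨a, rfl⟩
    by_cases h1 : (p : ℕ) + 1 = (q : ℕ)
    · have hplt : (p : ℕ) + 1 < N := by have := q.isLt; omega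
      have hq : q = ⟨(p : ℕ) + 1, hplt⟩ := Fin.ext h1.symm
      rw [hq] at hw ⊢
      have hfin := hadj p ⟨(p : ℕ) + 1, hplt⟩ (Or.inl rfl)
      obtain ⟨c, hc⟩ := dim1_char hfin (hXm (p : ℕ) hplt) (hX0 (p : ℕ) hplt) hw
      rw [hc]
      exact Submodule.smul_mem _ _ (Submodule.subset_span
        ⟨.inr (.inr (.inl ⟨(p : ℕ), by omega⟩)), rfl⟩)
    · by_cases h2 : (q : ℕ) + 1 = (p : ℕ)
      · have hqlt : (q : ℕ) + 1 < N := by have := p.isLt; omega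
        have hp : p = ⟨(q : ℕ) + 1, hqlt⟩ := Fin.ext h2.symm
        rw [hp] at hw ⊢
        have hfin := hadj ⟨(q : ℕ) + 1, hqlt⟩ q (Or.inr rfl)
        obtain ⟨c, hc⟩ := dim1_char hfin (hYm (q : ℕ) hqlt) (hY0 (q : ℕ) hqlt) hw
        rw [hc]
        exact Submodule.smul_mem _ _ (Submodule.subset_span
          ⟨.inr (.inr (.inr ⟨(q : ℕ), by omega⟩)), rfl⟩)
      · by_cases h3 : (p : ℕ) = (q : ℕ)
        · have hq : p = q := Fin.ext h3
          subst hq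
          rcases Nat.eq_zero_or_pos (p : ℕ) with h0 | h0
          · have hp : p = ⟨0, by omega⟩ := Fin.ext h0
            rw [hp]
            obtain ⟨c, hc⟩ := h00 a
            rw [hc]
            exact Submodule.smul_mem _ _ (Submodule.subset_span ⟨.inl _, rfl⟩)
          · have hmlt : ((p : ℕ) - 1) + 1 < N := by have := p.isLt; omega
            obtain ⟨hz0, hzn⟩ := hZprop ((p : ℕ) - 1) hmlt
            have hpeq : (⟨(p : ℕ) - 1 + 1, hmlt⟩ : Fin N) = p :=
              Fin.ext (show (p : ℕ) - 1 + 1 = (p : ℕ) by omega)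
            have hzm' : y ((p : ℕ) - 1) * x ((p : ℕ) - 1) ∈ corner E (e p) (e p) :=
              hpeq ▸ hZm ((p : ℕ) - 1) hmlt
            have hsp := dim2_char (hdiag p h0) (e_mem_corner horth p) hzm'
              (pair_indep (idem horth p) (e_ne_zero hE p) hzn hz0) hw
            obtain ⟨s, t, hst⟩ := Submodule.mem_span_pair.mp hsp
            rw [← hst]
            refine Submodule.add_mem _
              (Submodule.smul_mem _ _ (Submodule.subset_span ⟨.inl p, rfl⟩))
              (Submodule.smul_mem _ _ (Submodule.subset_span
                ⟨.inr (.inl ⟨(p : ℕ) - 1, by omega⟩), rfl⟩))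
        · have hcond : (p : ℕ) + 2 ≤ (q : ℕ) ∨ (q : ℕ) + 2 ≤ (p : ℕ) := by omega
          rw [hfar p q hcond] at hw
          rw [(Submodule.mem_bot ℂ).mp hw]
          exact Submodule.zero_mem _
  -- linear independence
  have hli : LinearIndependent ℂ b := by
    rw [Fintype.linearIndependent_iff]
    intro g hg
    have proj : ∀ (p q : Fin N) (i : Idx N),
        e p * (g i • b i) * e q = if c1 i = p ∧ c2 i = q then g i • b i else 0 := by
      intro p q i
      by_cases hp : c1 i = p
      · subst hp
        by_cases hq : c2 i = q
        · subst hq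
          rw [if_pos ⟨rfl, rfl⟩, mul_smul_comm, smul_mul_assoc, left_unit horth (bmem i),
            right_unit horth (bmem i)]
        · rw [if_neg (fun hh => hq hh.2), mul_smul_comm, smul_mul_assoc,
            left_unit horth (bmem i), right_eat horth (bmem i) q,
            if_neg (fun hh => hq hh.symm), smul_zero]
      · rw [if_neg (fun hh => hp hh.1), mul_smul_comm, left_eat horth (bmem i) p,
          if_neg (fun hh => hp hh.symm), smul_zero, zero_mul]
    have key : ∀ p q : Fin N,
        ∑ i : Idx N, (if c1 i = p ∧ c2 i = q then g i • b i else 0) = 0 := by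
      intro p q
      have hterm : (∑ i : Idx N, (if c1 i = p ∧ c2 i = q then g i • b i else 0))
          = ∑ i : Idx N, e p * (g i • b i) * e q :=
        Finset.sum_congr rfl fun i _ => (proj p q i).symm
      rw [hterm, ← Finset.sum_mul, ← Finset.mul_sum, hg, mul_zero, zero_mul]
    have smulz : ∀ (c : ℂ) (v : E), c • v = 0 → v ≠ 0 → c = 0 := by
      intro c v h hv
      by_contra hc
      exact hv (smul_cancel h hc)
    have diag : ∀ jm : Fin (N-1), g (.inl (up jm)) = 0 ∧ g (.inr (.inl jm)) = 0 := by
      intro jm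
      have hk := key (up jm) (up jm)
      have hzero : ∀ i ∈ Finset.univ,
          i ∉ ({.inl (up jm), .inr (.inl jm)} : Finset (Idx N)) →
          (if c1 i = up jm ∧ c2 i = up jm then g i • b i else 0) = 0 := by
        rintro (r | j | j | j) - hnotin
        · rw [if_neg]
          rintro ⟨hc1, -⟩
          exact hnotin (by rw [show r = up jm from hc1]; exact Finset.mem_insert_self _ _)
        · rw [if_neg]
          rintro ⟨hc1, -⟩
          have v1 : (j : ℕ) + 1 = (jm : ℕ) + 1 := congrArg (Fin.val : Fin N → ℕ) hc1
          have hj : j = jm := Fin.ext (by omega)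
          exact hnotin (by rw [hj]; exact Finset.mem_insert_of_mem (Finset.mem_singleton_self _))
        · rw [if_neg]
          rintro ⟨hc1, hc2⟩
          have v1 : (j : ℕ) = (jm : ℕ) + 1 := congrArg (Fin.val : Fin N → ℕ) hc1
          have v2 : (j : ℕ) + 1 = (jm : ℕ) + 1 := congrArg (Fin.val : Fin N → ℕ) hc2
          omega
        · rw [if_neg]
          rintro ⟨hc1, hc2⟩
          have v1 : (j : ℕ) + 1 = (jm : ℕ) + 1 := congrArg (Fin.val : Fin N → ℕ) hc1
          have v2 : (j : ℕ) = (jm : ℕ) + 1 := congrArg (Fin.val : Fin N → ℕ) hc2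
          omega
      have hsub := (Finset.sum_subset (Finset.subset_univ _) hzero).trans hk
      rw [Finset.sum_pair (by simp : (.inl (up jm) : Idx N) ≠ .inr (.inl jm))] at hsub
      rw [if_pos (show c1 (.inl (up jm) : Idx N) = up jm ∧ c2 (.inl (up jm) : Idx N) = up jm
            from ⟨rfl, rfl⟩),
          if_pos (show c1 (.inr (.inl jm) : Idx N) = up jm ∧ c2 (.inr (.inl jm) : Idx N) = up jm
            from ⟨rfl, rfl⟩)] at hsub
      have hli2 := pair_indep (idem horth (up jm)) (e_ne_zero hE (up jm))
        (hZprop (jm : ℕ) (hlt jm)).2 (hZprop (jm : ℕ) (hlt jm)).1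
      rw [LinearIndependent.pair_iff] at hli2
      exact hli2 _ _ hsub
    rintro (p | j | j | j)
    · rcases Nat.eq_zero_or_pos (p : ℕ) with h0 | h0
      · have hk := key p p
        have hzero : ∀ i ∈ Finset.univ, i ≠ (Sum.inl p : Idx N) →
            (if c1 i = p ∧ c2 i = p then g i • b i else 0) = 0 := by
          rintro (r | j | j | j) - hne
          · rw [if_neg]
            rintro ⟨hc1, -⟩
            exact hne (by rw [show r = p from hc1])
          · rw [if_neg]
            rintro ⟨hc1, -⟩
            have v1 : (j : ℕ) + 1 = (p : ℕ) := congrArg (Fin.val : Fin N → ℕ) hc1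
            omega
          · rw [if_neg]
            rintro ⟨hc1, hc2⟩
            have v1 : (j : ℕ) = (p : ℕ) := congrArg (Fin.val : Fin N → ℕ) hc1
            have v2 : (j : ℕ) + 1 = (p : ℕ) := congrArg (Fin.val : Fin N → ℕ) hc2
            omega
          · rw [if_neg]
            rintro ⟨hc1, hc2⟩
            have v1 : (j : ℕ) + 1 = (p : ℕ) := congrArg (Fin.val : Fin N → ℕ) hc1
            omega
        rw [Finset.sum_eq_single _ hzero (fun habs => absurd (Finset.mem_univ _) habs)] at hk
        rw [if_pos (show c1 (.inl p : Idx N) = p ∧ c2 (.inl p : Idx N) = p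
          from ⟨rfl, rfl⟩)] at hk
        exact smulz _ _ hk (e_ne_zero hE p)
      · have hd := (diag ⟨(p : ℕ) - 1, by have := p.isLt; omega⟩).1
        rw [show up ⟨(p : ℕ) - 1, by have := p.isLt; omega⟩ = p
          from Fin.ext (show (p : ℕ) - 1 + 1 = (p : ℕ) by omega)] at hd
        exact hd
    · exact (diag j).2
    · have hk := key (lo j) (up j)
      have hzero : ∀ i ∈ Finset.univ, i ≠ (Sum.inr (Sum.inr (Sum.inl j)) : Idx N) →
          (if c1 i = lo j ∧ c2 i = up j then g i • b i else 0) = 0 := by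
        rintro (r | j' | j' | j') - hne
        · rw [if_neg]
          rintro ⟨hc1, hc2⟩
          have v1 : (r : ℕ) = (j : ℕ) := congrArg (Fin.val : Fin N → ℕ) hc1
          have v2 : (r : ℕ) = (j : ℕ) + 1 := congrArg (Fin.val : Fin N → ℕ) hc2
          omega
        · rw [if_neg]
          rintro ⟨hc1, hc2⟩
          have v1 : (j' : ℕ) + 1 = (j : ℕ) := congrArg (Fin.val : Fin N → ℕ) hc1
          have v2 : (j' : ℕ) + 1 = (j : ℕ) + 1 := congrArg (Fin.val : Fin N → ℕ) hc2
          omega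
        · rw [if_neg]
          rintro ⟨hc1, -⟩
          have v1 : (j' : ℕ) = (j : ℕ) := congrArg (Fin.val : Fin N → ℕ) hc1
          exact hne (by rw [show j' = j from Fin.ext v1])
        · rw [if_neg]
          rintro ⟨hc1, hc2⟩
          have v1 : (j' : ℕ) + 1 = (j : ℕ) := congrArg (Fin.val : Fin N → ℕ) hc1
          have v2 : (j' : ℕ) = (j : ℕ) + 1 := congrArg (Fin.val : Fin N → ℕ) hc2
          omega
      rw [Finset.sum_eq_single _ hzero (fun habs => absurd (Finset.mem_univ _) habs)] at hk
      rw [if_pos (show c1 (.inr (.inr (.inl j)) : Idx N) = lo j ∧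
        c2 (.inr (.inr (.inl j)) : Idx N) = up j from ⟨rfl, rfl⟩)] at hk
      exact smulz _ _ hk (hX0 _ (hlt j))
    · have hk := key (up j) (lo j)
      have hzero : ∀ i ∈ Finset.univ, i ≠ (Sum.inr (Sum.inr (Sum.inr j)) : Idx N) →
          (if c1 i = up j ∧ c2 i = lo j then g i • b i else 0) = 0 := by
        rintro (r | j' | j' | j') - hne
        · rw [if_neg]
          rintro ⟨hc1, hc2⟩
          have v1 : (r : ℕ) = (j : ℕ) + 1 := congrArg (Fin.val : Fin N → ℕ) hc1
          have v2 : (r : ℕ) = (j : ℕ) := congrArg (Fin.val : Fin N → ℕ) hc2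
          omega
        · rw [if_neg]
          rintro ⟨hc1, hc2⟩
          have v1 : (j' : ℕ) + 1 = (j : ℕ) + 1 := congrArg (Fin.val : Fin N → ℕ) hc1
          have v2 : (j' : ℕ) + 1 = (j : ℕ) := congrArg (Fin.val : Fin N → ℕ) hc2
          omega
        · rw [if_neg]
          rintro ⟨hc1, hc2⟩
          have v1 : (j' : ℕ) = (j : ℕ) + 1 := congrArg (Fin.val : Fin N → ℕ) hc1
          have v2 : (j' : ℕ) + 1 = (j : ℕ) := congrArg (Fin.val : Fin N → ℕ) hc2
          omega
        · rw [if_neg]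
          rintro ⟨hc1, -⟩
          have v1 : (j' : ℕ) + 1 = (j : ℕ) + 1 := congrArg (Fin.val : Fin N → ℕ) hc1
          exact hne (by rw [show j' = j from Fin.ext (by omega)])
      rw [Finset.sum_eq_single _ hzero (fun habs => absurd (Finset.mem_univ _) habs)] at hk
      rw [if_pos (show c1 (.inr (.inr (.inr j)) : Idx N) = up j ∧
        c2 (.inr (.inr (.inr j)) : Idx N) = lo j from ⟨rfl, rfl⟩)] at hk
      exact smulz _ _ hk (hY0 _ (hlt j))
  exact ⟨b, fun p => rfl, hli, hspan, htable⟩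

end Stmt10Aux


/-- Any two finite-dimensional ℂ-algebras with complete families of orthogonal idempotents
satisfying (i)–(iv) for the same `N ≥ 2` are isomorphic via an isomorphism matching the
idempotents; in particular the dimension is `4N − 3`. -/
theorem stmt10 (N : ℕ) (hN : 2 ≤ N)
    (E : Type*) [Ring E] [Algebra ℂ E] [FiniteDimensional ℂ E] (e : Fin N → E)
    (E' : Type*) [Ring E'] [Algebra ℂ E'] [FiniteDimensional ℂ E'] (e' : Fin N → E')
    (hE : CornerData N hN E e) (hE' : CornerData N hN E' e') :
    (∃ Φ : E ≃ₐ[ℂ] E', ∀ i : Fin N, Φ (e i) = e' i) ∧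
      Module.finrank ℂ E = 4 * N - 3 := by
  obtain ⟨b, hbe, hli, hsp, htb⟩ := Stmt10Aux.exists_basis hE
  obtain ⟨b', hbe', hli', hsp', htb'⟩ := Stmt10Aux.exists_basis hE'
  let B : Module.Basis (Stmt10Aux.Idx N) ℂ E := Module.Basis.mk hli hsp
  let B' : Module.Basis (Stmt10Aux.Idx N) ℂ E' := Module.Basis.mk hli' hsp'
  have hB : ∀ i, B i = b i := fun i => Module.Basis.mk_apply hli hsp i
  have hB' : ∀ i, B' i = b' i := fun i => Module.Basis.mk_apply hli' hsp' i
  let f : E ≃ₗ[ℂ] E' := B.equiv B' (Equiv.refl _)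
  have hf : ∀ i, f (b i) = b' i := by
    intro i
    rw [← hB i, ← hB' i]
    exact Module.Basis.equiv_apply (b := B) (b' := B') (i := i) (e := Equiv.refl _)
  have hf1 : f 1 = 1 := by
    have h1 : (1 : E) = ∑ p : Fin N, e p := hE.2.1.symm
    have h1' : (1 : E') = ∑ p : Fin N, e' p := hE'.2.1.symm
    rw [h1, map_sum]
    rw [h1']
    refine Finset.sum_congr rfl fun p _ => ?_
    rw [← hbe p, ← hbe' p]
    exact hf _
  have hfm : ∀ u v : E, f (u * v) = f u * f v := by
    let M1 : E →ₗ[ℂ] E →ₗ[ℂ] E' := (LinearMap.mul ℂ E).compr₂ (f : E →ₗ[ℂ] E')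
    let M2 : E →ₗ[ℂ] E →ₗ[ℂ] E' :=
      (LinearMap.mul ℂ E').compl₁₂ (f : E →ₗ[ℂ] E') (f : E →ₗ[ℂ] E')
    have hM : M1 = M2 := by
      refine B.ext fun i => B.ext fun j => ?_
      have hgoal : f (b i * b j) = f (b i) * f (b j) := by
        rw [htb i j, hf, hf, htb' i j]
        cases tbl_eq : Stmt10Aux.tbl i j with
        | none => simp
        | some k => simpa using hf k
      calc M1 (B i) (B j) = f (b i * b j) := by rw [hB i, hB j]; rfl
      _ = f (b i) * f (b j) := hgoal
      _ = M2 (B i) (B j) := by rw [hB i, hB j]; rfl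
    intro u v
    exact LinearMap.congr_fun (LinearMap.congr_fun hM u) v
  refine ⟨⟨AlgEquiv.ofLinearEquiv f hf1 hfm, ?_⟩, ?_⟩
  · intro i
    show f (e i) = e' i
    rw [← hbe i, ← hbe' i]
    exact hf _
  · rw [Module.finrank_eq_card_basis B]
    have hc : Fintype.card (Stmt10Aux.Idx N) = N + ((N-1) + ((N-1) + (N-1))) := by
      simp [Stmt10Aux.Idx]
    rw [hc]
    omega
end
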